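/- arXiv:2407.10927 — 4 statements merged into one kernel-verified Lean document; each statement's English description precedes it below -/
import Mathlib

section
/- Fix n ≥ 1 and λ, μ, ν ∈ (ZMod 3)ⁿ with all entries in {0,1}. The map sending x to the pair ({e : x(e) = 2}, restriction of x to {e : x(e) ≠ 2}) is a well-defined bijection from the set of refined Knutson–Tao–Woodward tilings with boundary (λ, μ, ν) onto the set of Knutson–Tao–Woodward tilings with boundary (λ, μ, ν); in particular these two sets have the same cardinality. -/
namespace KTWPuzzle

/-- Edges of the size-`n` puzzle triangle: a family index (`0 = L`, `1 = R`,
`2 = H`) together with indices `(r, c)` satisfying `1 ≤ c ≤ r ≤ n`. -/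
def Edge (n : ℕ) : Type :=
  {p : Fin 3 × ℕ × ℕ // 1 ≤ p.2.2 ∧ p.2.2 ≤ p.2.1 ∧ p.2.1 ≤ n}

/-- The edge `L(r,c)`. -/
def eL (n r c : ℕ) (h : 1 ≤ c ∧ c ≤ r ∧ r ≤ n) : Edge n := ⟨(0, r, c), h⟩

/-- The edge `R(r,c)`. -/
def eR (n r c : ℕ) (h : 1 ≤ c ∧ c ≤ r ∧ r ≤ n) : Edge n := ⟨(1, r, c), h⟩

/-- The edge `H(r,c)`. -/
def eH (n r c : ℕ) (h : 1 ≤ c ∧ c ≤ r ∧ r ≤ n) : Edge n := ⟨(2, r, c), h⟩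

/-- The boundary edges: `L(r,1)` (left side), `R(r,r)` (right side) and
`H(n,c)` (bottom side); all other edges are interior. -/
def boundary (n : ℕ) : Set (Edge n) :=
  {e | (e.1.1 = 0 ∧ e.1.2.2 = 1) ∨ (e.1.1 = 1 ∧ e.1.2.2 = e.1.2.1) ∨
       (e.1.1 = 2 ∧ e.1.2.1 = n)}

/-- The atomic refinement `Ω̄₀` of the Knutson–Tao–Woodward puzzle pieces:
each unit triangle's edge values read clockwise starting from its left edge. -/
def Omega0 : Set (ZMod 3 × ZMod 3 × ZMod 3) :=
  {(0, 0, 0), (1, 1, 1), (1, 0, 2), (0, 2, 1), (2, 1, 0)}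

/-- Refined Knutson–Tao–Woodward tilings with boundary `(λ, μ, ν)`:
`ZMod 3`-valued edge labellings matching the boundary and whose every unit
triangle, read clockwise from its left edge, lies in `Ω̄₀`. -/
def RefinedTiling (n : ℕ) (lam mu nu : Fin n → ZMod 3) : Set (Edge n → ZMod 3) :=
  {x |
    (∀ r, ∀ h : 1 ≤ r ∧ r ≤ n, x (eL n r 1 (by omega)) = lam ⟨r - 1, by omega⟩) ∧
    (∀ r, ∀ h : 1 ≤ r ∧ r ≤ n, x (eR n r r (by omega)) = mu ⟨r - 1, by omega⟩) ∧
    (∀ c, ∀ h : 1 ≤ c ∧ c ≤ n, x (eH n n c (by omega)) = nu ⟨c - 1, by omega⟩) ∧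
    (∀ r c, ∀ h : 1 ≤ c ∧ c ≤ r ∧ r ≤ n,
      (x (eL n r c h), x (eR n r c h), x (eH n r c h)) ∈ Omega0) ∧
    (∀ r c, ∀ h : 1 ≤ c ∧ c + 1 ≤ r ∧ r ≤ n,
      (x (eR n r c (by omega)), x (eH n (r - 1) c (by omega)),
        x (eL n r (c + 1) (by omega))) ∈ Omega0)}

/-- A labelling of the edges outside a set `M` by values in `ZMod 3`. -/
def Labelling (n : ℕ) (M : Set (Edge n)) : Type :=
  ∀ e : Edge n, e ∉ M → ZMod 3

/-- Knutson–Tao–Woodward tilings with boundary `(λ, μ, ν)`: pairs `(M, y)`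
where `M` is a set of interior edges (the mid-edges of the rhombus pieces) and
`y` assigns to every edge not in `M` a value in `{0, 1} ⊆ ZMod 3`, matching the
boundary, such that every unit triangle has at most one edge in `M`, every
unit triangle with no edge in `M` has all three edge values equal, and every
edge of `M` sits inside the unique Knutson–Tao–Woodward rhombus labelling. -/
def KTWTiling (n : ℕ) (lam mu nu : Fin n → ZMod 3) :
    Set ((M : Set (Edge n)) × Labelling n M) :=
  {p |
    -- `M` is a set of interior edges
    (∀ e ∈ p.1, e ∉ boundary n) ∧
    -- the values of `y` lie in `{0, 1}`
    (∀ e, ∀ h : e ∉ p.1, p.2 e h = 0 ∨ p.2 e h = 1) ∧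
    -- boundary values match `λ`, `μ`, `ν`
    (∀ r, ∀ h : 1 ≤ r ∧ r ≤ n, ∀ hm : eL n r 1 (by omega) ∉ p.1,
      p.2 (eL n r 1 (by omega)) hm = lam ⟨r - 1, by omega⟩) ∧
    (∀ r, ∀ h : 1 ≤ r ∧ r ≤ n, ∀ hm : eR n r r (by omega) ∉ p.1,
      p.2 (eR n r r (by omega)) hm = mu ⟨r - 1, by omega⟩) ∧
    (∀ c, ∀ h : 1 ≤ c ∧ c ≤ n, ∀ hm : eH n n c (by omega) ∉ p.1,
      p.2 (eH n n c (by omega)) hm = nu ⟨c - 1, by omega⟩) ∧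
    -- every upward unit triangle has at most one edge in `M`
    (∀ r c, ∀ h : 1 ≤ c ∧ c ≤ r ∧ r ≤ n,
      ¬(eL n r c h ∈ p.1 ∧ eR n r c h ∈ p.1) ∧
      ¬(eL n r c h ∈ p.1 ∧ eH n r c h ∈ p.1) ∧
      ¬(eR n r c h ∈ p.1 ∧ eH n r c h ∈ p.1)) ∧
    -- every downward unit triangle has at most one edge in `M`
    (∀ r c, ∀ h : 1 ≤ c ∧ c + 1 ≤ r ∧ r ≤ n,
      ¬(eR n r c (by omega) ∈ p.1 ∧ eH n (r - 1) c (by omega) ∈ p.1) ∧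
      ¬(eR n r c (by omega) ∈ p.1 ∧ eL n r (c + 1) (by omega) ∈ p.1) ∧
      ¬(eH n (r - 1) c (by omega) ∈ p.1 ∧ eL n r (c + 1) (by omega) ∈ p.1)) ∧
    -- upward unit triangles with no edge in `M` have all edge values equal
    (∀ r c, ∀ h : 1 ≤ c ∧ c ≤ r ∧ r ≤ n,
      ∀ h1 : eL n r c h ∉ p.1, ∀ h2 : eR n r c h ∉ p.1, ∀ h3 : eH n r c h ∉ p.1,
        p.2 (eL n r c h) h1 = p.2 (eR n r c h) h2 ∧
        p.2 (eR n r c h) h2 = p.2 (eH n r c h) h3) ∧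
    -- downward unit triangles with no edge in `M` have all edge values equal
    (∀ r c, ∀ h : 1 ≤ c ∧ c + 1 ≤ r ∧ r ≤ n,
      ∀ h1 : eR n r c (by omega) ∉ p.1, ∀ h2 : eH n (r - 1) c (by omega) ∉ p.1,
      ∀ h3 : eL n r (c + 1) (by omega) ∉ p.1,
        p.2 (eR n r c (by omega)) h1 = p.2 (eH n (r - 1) c (by omega)) h2 ∧
        p.2 (eH n (r - 1) c (by omega)) h2 = p.2 (eL n r (c + 1) (by omega)) h3) ∧
    -- rhombus with horizontal mid-edge `H(r,c)`
    (∀ r c, ∀ h : 1 ≤ c ∧ c ≤ r ∧ r + 1 ≤ n, eH n r c (by omega) ∈ p.1 →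
      (∀ h1 : eL n r c (by omega) ∉ p.1, p.2 (eL n r c (by omega)) h1 = 1) ∧
      (∀ h2 : eL n (r + 1) (c + 1) (by omega) ∉ p.1,
        p.2 (eL n (r + 1) (c + 1) (by omega)) h2 = 1) ∧
      (∀ h3 : eR n r c (by omega) ∉ p.1, p.2 (eR n r c (by omega)) h3 = 0) ∧
      (∀ h4 : eR n (r + 1) c (by omega) ∉ p.1,
        p.2 (eR n (r + 1) c (by omega)) h4 = 0)) ∧
    -- rhombus with mid-edge `L(r,c+1)`
    (∀ r c, ∀ h : 1 ≤ c ∧ c + 1 ≤ r ∧ r ≤ n, eL n r (c + 1) (by omega) ∈ p.1 →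
      (∀ h1 : eR n r c (by omega) ∉ p.1, p.2 (eR n r c (by omega)) h1 = 1) ∧
      (∀ h2 : eR n r (c + 1) (by omega) ∉ p.1,
        p.2 (eR n r (c + 1) (by omega)) h2 = 1) ∧
      (∀ h3 : eH n (r - 1) c (by omega) ∉ p.1,
        p.2 (eH n (r - 1) c (by omega)) h3 = 0) ∧
      (∀ h4 : eH n r (c + 1) (by omega) ∉ p.1,
        p.2 (eH n r (c + 1) (by omega)) h4 = 0)) ∧
    -- rhombus with mid-edge `R(r,c)`
    (∀ r c, ∀ h : 1 ≤ c ∧ c + 1 ≤ r ∧ r ≤ n, eR n r c (by omega) ∈ p.1 →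
      (∀ h1 : eL n r c (by omega) ∉ p.1, p.2 (eL n r c (by omega)) h1 = 0) ∧
      (∀ h2 : eL n r (c + 1) (by omega) ∉ p.1,
        p.2 (eL n r (c + 1) (by omega)) h2 = 0) ∧
      (∀ h3 : eH n (r - 1) c (by omega) ∉ p.1,
        p.2 (eH n (r - 1) c (by omega)) h3 = 1) ∧
      (∀ h4 : eH n r c (by omega) ∉ p.1, p.2 (eH n r c (by omega)) h4 = 1))}


section Helpers

lemma zmod3_cases (a : ZMod 3) : a = 0 ∨ a = 1 ∨ a = 2 := by revert a; decide

lemma omega0_cases {a b c : ZMod 3} (h : (a,b,c) ∈ Omega0) :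
    (a=0∧b=0∧c=0) ∨ (a=1∧b=1∧c=1) ∨ (a=1∧b=0∧c=2) ∨ (a=0∧b=2∧c=1) ∨ (a=2∧b=1∧c=0) := by
  simpa [Omega0, Prod.ext_iff] using h

lemma m000 : ((0:ZMod 3),(0:ZMod 3),(0:ZMod 3)) ∈ Omega0 := by simp [Omega0]
lemma m111 : ((1:ZMod 3),(1:ZMod 3),(1:ZMod 3)) ∈ Omega0 := by simp [Omega0]
lemma m102 : ((1:ZMod 3),(0:ZMod 3),(2:ZMod 3)) ∈ Omega0 := by simp [Omega0]
lemma m021 : ((0:ZMod 3),(2:ZMod 3),(1:ZMod 3)) ∈ Omega0 := by simp [Omega0]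
lemma m210 : ((2:ZMod 3),(1:ZMod 3),(0:ZMod 3)) ∈ Omega0 := by simp [Omega0]

lemma omega0_a2 {a b c : ZMod 3} (h : (a,b,c) ∈ Omega0) (ha : a = 2) : b = 1 ∧ c = 0 := by
  rcases omega0_cases h with ⟨h1,h2,h3⟩|⟨h1,h2,h3⟩|⟨h1,h2,h3⟩|⟨h1,h2,h3⟩|⟨h1,h2,h3⟩ <;>
    subst h1 h2 h3 <;> first | exact ⟨rfl, rfl⟩ | exact absurd ha (by decide)
lemma omega0_b2 {a b c : ZMod 3} (h : (a,b,c) ∈ Omega0) (hb : b = 2) : a = 0 ∧ c = 1 := by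
  rcases omega0_cases h with ⟨h1,h2,h3⟩|⟨h1,h2,h3⟩|⟨h1,h2,h3⟩|⟨h1,h2,h3⟩|⟨h1,h2,h3⟩ <;>
    subst h1 h2 h3 <;> first | exact ⟨rfl, rfl⟩ | exact absurd hb (by decide)
lemma omega0_c2 {a b c : ZMod 3} (h : (a,b,c) ∈ Omega0) (hc : c = 2) : a = 1 ∧ b = 0 := by
  rcases omega0_cases h with ⟨h1,h2,h3⟩|⟨h1,h2,h3⟩|⟨h1,h2,h3⟩|⟨h1,h2,h3⟩|⟨h1,h2,h3⟩ <;>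
    subst h1 h2 h3 <;> first | exact ⟨rfl, rfl⟩ | exact absurd hc (by decide)
lemma omega0_no2 {a b c : ZMod 3} (h : (a,b,c) ∈ Omega0) (ha : a ≠ 2) (hb : b ≠ 2) (hc : c ≠ 2) :
    (a=0∧b=0∧c=0) ∨ (a=1∧b=1∧c=1) := by
  rcases omega0_cases h with ⟨h1,h2,h3⟩|⟨h1,h2,h3⟩|⟨h1,h2,h3⟩|⟨h1,h2,h3⟩|⟨h1,h2,h3⟩ <;>
    subst h1 h2 h3 <;> simp_all

lemma heq_key {n : ℕ} (S T : Set (Edge n)) (hST : S = T)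
    (f : ∀ e : Edge n, e ∉ S → ZMod 3) (g : ∀ e : Edge n, e ∉ T → ZMod 3)
    (hfg : HEq f g) : ∀ e (h1 : e ∉ S) (h2 : e ∉ T), f e h1 = g e h2 := by
  subst hST
  intro e h1 h2
  exact congrFun (congrFun (eq_of_heq hfg) e) h1

end Helpers

/-- for `n ≥ 1` and `λ, μ, ν ∈ (ZMod 3)ⁿ` with all entries in
`{0, 1}`, the map sending a refined tiling `x` to the pair
`({e | x e = 2}, restriction of x to {e | x e ≠ 2})` is a bijection from the
set of refined Knutson–Tao–Woodward tilings with boundary `(λ, μ, ν)` onto the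
set of Knutson–Tao–Woodward tilings with boundary `(λ, μ, ν)`; in particular
the two sets have the same cardinality. -/
theorem refinedTiling_bijOn_ktwTiling
    (n : ℕ) (hn : 1 ≤ n) (lam mu nu : Fin n → ZMod 3)
    (hlam : ∀ i, lam i = 0 ∨ lam i = 1)
    (hmu : ∀ i, mu i = 0 ∨ mu i = 1)
    (hnu : ∀ i, nu i = 0 ∨ nu i = 1) :
    Set.BijOn
      (fun x : Edge n → ZMod 3 =>
        (⟨{e | x e = 2}, fun e _ => x e⟩ : (M : Set (Edge n)) × Labelling n M))
      (RefinedTiling n lam mu nu) (KTWTiling n lam mu nu) ∧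
    Nat.card ↥(RefinedTiling n lam mu nu) = Nat.card ↥(KTWTiling n lam mu nu) := by
  classical
  have key : Set.BijOn
      (fun x : Edge n → ZMod 3 =>
        (⟨{e | x e = 2}, fun e _ => x e⟩ : (M : Set (Edge n)) × Labelling n M))
      (RefinedTiling n lam mu nu) (KTWTiling n lam mu nu) := by
    refine ⟨?_, ?_, ?_⟩
    · -- MapsTo
      intro x hx
      simp only [RefinedTiling, Set.mem_setOf_eq] at hx
      obtain ⟨hbL, hbR, hbH, hUp, hDn⟩ := hx
      simp only [KTWTiling, Set.mem_setOf_eq]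
      refine ⟨?_, ?_, ?_, ?_, ?_, ?_, ?_, ?_, ?_, ?_, ?_, ?_⟩
      · -- interior
        rintro ⟨⟨f, r, c⟩, hp⟩ hm hb
        have hm' : x ⟨(f, r, c), hp⟩ = 2 := hm
        have hp' : 1 ≤ c ∧ c ≤ r ∧ r ≤ n := hp
        rcases hb with ⟨hf, hc⟩ | ⟨hf, hc⟩ | ⟨hf, hr⟩
        · simp only at hf hc; subst hf; subst hc
          have h2 : lam ⟨r - 1, by omega⟩ = 2 := by
            rw [← hbL r ⟨hp'.2.1, hp'.2.2⟩]; exact hm'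
          rcases hlam ⟨r - 1, by omega⟩ with h | h <;> rw [h] at h2 <;>
            exact absurd h2 (by decide)
        · simp only at hf hc; subst hf; subst hc
          have h2 : mu ⟨c - 1, by omega⟩ = 2 := by
            rw [← hbR c ⟨by omega, by omega⟩]; exact hm'
          rcases hmu ⟨c - 1, by omega⟩ with h | h <;> rw [h] at h2 <;>
            exact absurd h2 (by decide)
        · simp only at hf hr; subst hf; subst hr
          have h2 : nu ⟨c - 1, by omega⟩ = 2 := by
            rw [← hbH c ⟨by omega, by omega⟩]; exact hm'
          rcases hnu ⟨c - 1, by omega⟩ with h | h <;> rw [h] at h2 <;>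
            exact absurd h2 (by decide)
      · -- values in {0,1}
        intro e he
        rcases zmod3_cases (x e) with h | h | h
        exacts [Or.inl h, Or.inr h, absurd h he]
      · intro r h hm; exact hbL r h
      · intro r h hm; exact hbR r h
      · intro c h hm; exact hbH c h
      · -- up at most one
        intro r c h
        have ht := hUp r c h
        refine ⟨?_, ?_, ?_⟩ <;> rintro ⟨h1, h2⟩
        · exact absurd ((omega0_a2 ht h1).1.symm.trans h2) (by decide)
        · exact absurd ((omega0_a2 ht h1).2.symm.trans h2) (by decide)
        · exact absurd ((omega0_b2 ht h1).2.symm.trans h2) (by decide)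
      · -- down at most one
        intro r c h
        have ht := hDn r c h
        refine ⟨?_, ?_, ?_⟩ <;> rintro ⟨h1, h2⟩
        · exact absurd ((omega0_a2 ht h1).1.symm.trans h2) (by decide)
        · exact absurd ((omega0_a2 ht h1).2.symm.trans h2) (by decide)
        · exact absurd ((omega0_b2 ht h1).2.symm.trans h2) (by decide)
      · -- up all equal
        intro r c h h1 h2 h3
        rcases omega0_no2 (hUp r c h) h1 h2 h3 with ⟨a, b, cc⟩ | ⟨a, b, cc⟩ <;>
          exact ⟨a.trans b.symm, b.trans cc.symm⟩
      · -- down all equal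
        intro r c h h1 h2 h3
        rcases omega0_no2 (hDn r c h) h1 h2 h3 with ⟨a, b, cc⟩ | ⟨a, b, cc⟩ <;>
          exact ⟨a.trans b.symm, b.trans cc.symm⟩
      · -- rhombus H
        intro r c h hm
        have hm' : x (eH n r c ⟨h.1, h.2.1, by omega⟩) = 2 := hm
        have t1 := omega0_c2 (hUp r c ⟨h.1, h.2.1, by omega⟩) hm'
        have t2 := omega0_b2 (hDn (r + 1) c ⟨h.1, by omega, by omega⟩) hm'
        exact ⟨fun _ => t1.1, fun _ => t2.2, fun _ => t1.2, fun _ => t2.1⟩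
      · -- rhombus L
        intro r c h hm
        have hm' : x (eL n r (c + 1) ⟨by omega, by omega, h.2.2⟩) = 2 := hm
        have t1 := omega0_c2 (hDn r c h) hm'
        have t2 := omega0_a2 (hUp r (c + 1) ⟨by omega, by omega, h.2.2⟩) hm'
        exact ⟨fun _ => t1.1, fun _ => t2.1, fun _ => t1.2, fun _ => t2.2⟩
      · -- rhombus R
        intro r c h hm
        have hm' : x (eR n r c ⟨h.1, by omega, h.2.2⟩) = 2 := hm
        have t1 := omega0_b2 (hUp r c ⟨h.1, by omega, h.2.2⟩) hm'
        have t2 := omega0_a2 (hDn r c h) hm'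
        exact ⟨fun _ => t1.1, fun _ => t2.2, fun _ => t2.1, fun _ => t1.2⟩
    · -- InjOn
      intro x hx x' hx' heq
      obtain ⟨hM, hy⟩ := Sigma.mk.inj_iff.mp heq
      funext e
      by_cases he : x e = 2
      · have he' : x' e = 2 := (Set.ext_iff.mp hM e).mp he
        rw [he, he']
      · have he' : ¬ x' e = 2 := fun hh => he ((Set.ext_iff.mp hM e).mpr hh)
        exact heq_key _ _ hM _ _ hy e he he'
    · -- SurjOn
      intro p hp
      obtain ⟨M, y⟩ := p
      simp only [KTWTiling, Set.mem_setOf_eq] at hp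
      obtain ⟨hInt, hy01, hbL, hbR, hbH, hUp1, hDn1, hUpE, hDnE, hRhH, hRhL, hRhR⟩ := hp
      obtain ⟨x, hx2, hxy⟩ : ∃ x : Edge n → ZMod 3,
          (∀ e (_ : e ∈ M), x e = 2) ∧ (∀ e (h : e ∉ M), x e = y e h) :=
        ⟨fun e => if h : e ∈ M then 2 else y e h,
          fun e h => dif_pos h, fun e h => dif_neg h⟩
      have hyne2 : ∀ e (h : e ∉ M), y e h ≠ 2 := by
        intro e h hh
        rcases hy01 e h with h0 | h0 <;> rw [hh] at h0 <;> exact absurd h0 (by decide)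
      have hxmem : ∀ r c (h : 1 ≤ c ∧ c ≤ r ∧ r ≤ n),
          (x (eL n r c h), x (eR n r c h), x (eH n r c h)) ∈ Omega0 := by
        intro r c h
        by_cases h1 : eL n r c h ∈ M <;> by_cases h2 : eR n r c h ∈ M <;>
          by_cases h3 : eH n r c h ∈ M
        · exact absurd ⟨h1, h2⟩ (hUp1 r c h).1
        · exact absurd ⟨h1, h2⟩ (hUp1 r c h).1
        · exact absurd ⟨h1, h3⟩ (hUp1 r c h).2.1
        · -- only L in M
          have hnb := hInt _ h1
          have hc : c ≠ 1 := fun hc => hnb (Or.inl ⟨rfl, hc⟩)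
          obtain ⟨c', rfl⟩ : ∃ c', c = c' + 1 := ⟨c - 1, by omega⟩
          have hr := hRhL r c' ⟨by omega, by omega, h.2.2⟩ h1
          have a1 : x (eL n r (c' + 1) h) = 2 := hx2 _ h1
          have a2 : x (eR n r (c' + 1) h) = 1 := (hxy _ h2).trans (hr.2.1 h2)
          have a3 : x (eH n r (c' + 1) h) = 0 := (hxy _ h3).trans (hr.2.2.2 h3)
          exact Set.mem_of_eq_of_mem (Prod.ext a1 (Prod.ext a2 a3)) m210
        · exact absurd ⟨h2, h3⟩ (hUp1 r c h).2.2
        · -- only R in M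
          have hnb := hInt _ h2
          have hc : c ≠ r := fun hc => hnb (Or.inr (Or.inl ⟨rfl, hc⟩))
          have hr := hRhR r c ⟨h.1, by omega, h.2.2⟩ h2
          have a1 : x (eL n r c h) = 0 := (hxy _ h1).trans (hr.1 h1)
          have a2 : x (eR n r c h) = 2 := hx2 _ h2
          have a3 : x (eH n r c h) = 1 := (hxy _ h3).trans (hr.2.2.2 h3)
          exact Set.mem_of_eq_of_mem (Prod.ext a1 (Prod.ext a2 a3)) m021
        · -- only H in M
          have hnb := hInt _ h3
          have hrn : r ≠ n := fun hr => hnb (Or.inr (Or.inr ⟨rfl, hr⟩))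
          have hr := hRhH r c ⟨h.1, h.2.1, by omega⟩ h3
          have a1 : x (eL n r c h) = 1 := (hxy _ h1).trans (hr.1 h1)
          have a2 : x (eR n r c h) = 0 := (hxy _ h2).trans (hr.2.2.1 h2)
          have a3 : x (eH n r c h) = 2 := hx2 _ h3
          exact Set.mem_of_eq_of_mem (Prod.ext a1 (Prod.ext a2 a3)) m102
        · -- none in M
          have hv := hUpE r c h h1 h2 h3
          rcases hy01 _ h1 with h0 | h0
          · have a1 : x (eL n r c h) = 0 := (hxy _ h1).trans h0
            have a2 : x (eR n r c h) = 0 := (hxy _ h2).trans (hv.1.symm.trans h0)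
            have a3 : x (eH n r c h) = 0 :=
              (hxy _ h3).trans ((hv.1.trans hv.2).symm.trans h0)
            exact Set.mem_of_eq_of_mem (Prod.ext a1 (Prod.ext a2 a3)) m000
          · have a1 : x (eL n r c h) = 1 := (hxy _ h1).trans h0
            have a2 : x (eR n r c h) = 1 := (hxy _ h2).trans (hv.1.symm.trans h0)
            have a3 : x (eH n r c h) = 1 :=
              (hxy _ h3).trans ((hv.1.trans hv.2).symm.trans h0)
            exact Set.mem_of_eq_of_mem (Prod.ext a1 (Prod.ext a2 a3)) m111
      have hxmemD : ∀ r c (h : 1 ≤ c ∧ c + 1 ≤ r ∧ r ≤ n),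
          (x (eR n r c ⟨h.1, by omega, h.2.2⟩), x (eH n (r - 1) c ⟨h.1, by omega, by omega⟩),
            x (eL n r (c + 1) ⟨by omega, h.2.1, h.2.2⟩)) ∈ Omega0 := by
        intro r c h
        by_cases h1 : eR n r c ⟨h.1, by omega, h.2.2⟩ ∈ M <;>
          by_cases h2 : eH n (r - 1) c ⟨h.1, by omega, by omega⟩ ∈ M <;>
          by_cases h3 : eL n r (c + 1) ⟨by omega, h.2.1, h.2.2⟩ ∈ M
        · exact absurd ⟨h1, h2⟩ (hDn1 r c h).1
        · exact absurd ⟨h1, h2⟩ (hDn1 r c h).1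
        · exact absurd ⟨h1, h3⟩ (hDn1 r c h).2.1
        · -- only R in M
          have hr := hRhR r c h h1
          have a1 : x (eR n r c ⟨h.1, by omega, h.2.2⟩) = 2 := hx2 _ h1
          have a2 : x (eH n (r - 1) c ⟨h.1, by omega, by omega⟩) = 1 :=
            (hxy _ h2).trans (hr.2.2.1 h2)
          have a3 : x (eL n r (c + 1) ⟨by omega, h.2.1, h.2.2⟩) = 0 :=
            (hxy _ h3).trans (hr.2.1 h3)
          exact Set.mem_of_eq_of_mem (Prod.ext a1 (Prod.ext a2 a3)) m210
        · exact absurd ⟨h2, h3⟩ (hDn1 r c h).2.2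
        · -- only H in M
          obtain ⟨s, rfl⟩ : ∃ s, r = s + 1 := ⟨r - 1, by omega⟩
          have hr := hRhH s c ⟨h.1, by omega, by omega⟩ h2
          have a1 : x (eR n (s + 1) c ⟨h.1, by omega, h.2.2⟩) = 0 :=
            (hxy _ h1).trans (hr.2.2.2 h1)
          have a2 : x (eH n (s + 1 - 1) c ⟨h.1, by omega, by omega⟩) = 2 := hx2 _ h2
          have a3 : x (eL n (s + 1) (c + 1) ⟨by omega, h.2.1, h.2.2⟩) = 1 :=
            (hxy _ h3).trans (hr.2.1 h3)
          exact Set.mem_of_eq_of_mem (Prod.ext a1 (Prod.ext a2 a3)) m021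
        · -- only L in M
          have hr := hRhL r c h h3
          have a1 : x (eR n r c ⟨h.1, by omega, h.2.2⟩) = 1 := (hxy _ h1).trans (hr.1 h1)
          have a2 : x (eH n (r - 1) c ⟨h.1, by omega, by omega⟩) = 0 :=
            (hxy _ h2).trans (hr.2.2.1 h2)
          have a3 : x (eL n r (c + 1) ⟨by omega, h.2.1, h.2.2⟩) = 2 := hx2 _ h3
          exact Set.mem_of_eq_of_mem (Prod.ext a1 (Prod.ext a2 a3)) m102
        · -- none in M
          have hv := hDnE r c h h1 h2 h3
          rcases hy01 _ h1 with h0 | h0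
          · have a1 : x (eR n r c ⟨h.1, by omega, h.2.2⟩) = 0 := (hxy _ h1).trans h0
            have a2 : x (eH n (r - 1) c ⟨h.1, by omega, by omega⟩) = 0 :=
              (hxy _ h2).trans (hv.1.symm.trans h0)
            have a3 : x (eL n r (c + 1) ⟨by omega, h.2.1, h.2.2⟩) = 0 :=
              (hxy _ h3).trans ((hv.1.trans hv.2).symm.trans h0)
            exact Set.mem_of_eq_of_mem (Prod.ext a1 (Prod.ext a2 a3)) m000
          · have a1 : x (eR n r c ⟨h.1, by omega, h.2.2⟩) = 1 := (hxy _ h1).trans h0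
            have a2 : x (eH n (r - 1) c ⟨h.1, by omega, by omega⟩) = 1 :=
              (hxy _ h2).trans (hv.1.symm.trans h0)
            have a3 : x (eL n r (c + 1) ⟨by omega, h.2.1, h.2.2⟩) = 1 :=
              (hxy _ h3).trans ((hv.1.trans hv.2).symm.trans h0)
            exact Set.mem_of_eq_of_mem (Prod.ext a1 (Prod.ext a2 a3)) m111
      refine ⟨x, ⟨?_, ?_, ?_, ?_, ?_⟩, ?_⟩
      · intro r h
        have hnm : eL n r 1 ⟨le_refl 1, h.1, h.2⟩ ∉ M :=
          fun hmem => hInt _ hmem (Or.inl ⟨rfl, rfl⟩)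
        exact (hxy _ hnm).trans (hbL r h hnm)
      · intro r h
        have hnm : eR n r r ⟨h.1, le_refl r, h.2⟩ ∉ M :=
          fun hmem => hInt _ hmem (Or.inr (Or.inl ⟨rfl, rfl⟩))
        exact (hxy _ hnm).trans (hbR r h hnm)
      · intro c h
        have hnm : eH n n c ⟨h.1, h.2, le_refl n⟩ ∉ M :=
          fun hmem => hInt _ hmem (Or.inr (Or.inr ⟨rfl, rfl⟩))
        exact (hxy _ hnm).trans (hbH c h hnm)
      · exact hxmem
      · exact fun r c h => hxmemD r c h
      · -- image equality
        have hM : {e | x e = 2} = M := by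
          ext e
          constructor
          · intro he
            by_contra hne
            exact hyne2 e hne ((hxy e hne).symm.trans he)
          · exact fun he => hx2 e he
        subst hM
        show (⟨{e | x e = 2}, fun e _ => x e⟩ : (M : Set (Edge n)) × Labelling n M) =
          ⟨{e | x e = 2}, y⟩
        congr 1
        exact funext fun e => funext fun he => hxy e he
  refine ⟨key, Nat.card_congr (Set.BijOn.equiv _ key)⟩

end KTWPuzzle
end

section
/- Let n be a natural number and let P be a prime ideal of the polynomial ring MvPolynomial (Fin n) (ZMod 3) such that X_i² − X_i ∈ P for every i. Then there exists a point a : Fin n → ZMod 3 with a(i) ∈ {0,1} for every i such that P is the ideal generated by the polynomials X_i − a(i) for i = 1, …, n. -/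
open MvPolynomial

/-- Every polynomial is congruent to the constant given by its value at `a`
modulo the ideal generated by `X i - C (a i)`. -/
lemma sub_C_eval_mem_span_point {n : ℕ} {K : Type*} [CommRing K] (a : Fin n → K)
    (p : MvPolynomial (Fin n) K) :
    p - C (eval a p) ∈
      Ideal.span (Set.range fun i => (X i : MvPolynomial (Fin n) K) - C (a i)) := by
  set I := Ideal.span (Set.range fun i => (X i : MvPolynomial (Fin n) K) - C (a i)) with hI
  induction p using MvPolynomial.induction_on with
  | C r => simp
  | add p q hp hq =>
      have := I.add_mem hp hq
      convert this using 1
      simp [map_add]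
      ring
  | mul_X p i hp =>
      have hXi : (X i : MvPolynomial (Fin n) K) - C (a i) ∈ I :=
        Ideal.subset_span ⟨i, rfl⟩
      have h1 : p * ((X i : MvPolynomial (Fin n) K) - C (a i)) ∈ I := I.mul_mem_left _ hXi
      have h2 : C (a i) * (p - C (eval a p)) ∈ I := I.mul_mem_left _ hp
      have := I.add_mem h1 h2
      convert this using 1
      simp [map_mul]
      ring

/-- every prime ideal of `MvPolynomial (Fin n) (ZMod 3)`
containing the polynomials `Xᵢ² − Xᵢ` is the vanishing ideal
`⟨X₁ − a₁, …, Xₙ − aₙ⟩` of a single point `a` with `{0,1}`-valued entries. -/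
theorem prime_of_sq_sub_self_mem_eq_span_point
    (n : ℕ) (P : Ideal (MvPolynomial (Fin n) (ZMod 3))) (hP : P.IsPrime)
    (h : ∀ i : Fin n, MvPolynomial.X i ^ 2 - MvPolynomial.X i ∈ P) :
    ∃ a : Fin n → ZMod 3, (∀ i, a i = 0 ∨ a i = 1) ∧
      P = Ideal.span (Set.range fun i => MvPolynomial.X i - MvPolynomial.C (a i)) := by
  classical
  -- for each i, X i ∈ P or X i - 1 ∈ P
  have key : ∀ i : Fin n, X i ∈ P ∨ (X i - C 1 : MvPolynomial (Fin n) (ZMod 3)) ∈ P := by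
    intro i
    have : (X i : MvPolynomial (Fin n) (ZMod 3)) * (X i - C 1) ∈ P := by
      have := h i
      convert this using 1
      simp
      ring
    exact hP.mem_or_mem this
  have key' : ∀ i : Fin n, ∃ c : ZMod 3, (c = 0 ∨ c = 1) ∧
      (X i - C c : MvPolynomial (Fin n) (ZMod 3)) ∈ P := by
    intro i
    rcases key i with h0 | h1
    · exact ⟨0, Or.inl rfl, by simpa using h0⟩
    · exact ⟨1, Or.inr rfl, h1⟩
  choose a ha01 haP using key'
  refine ⟨a, ha01, le_antisymm ?_ ?_⟩
  · intro p hp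
    have hsub := sub_C_eval_mem_span_point a p
    have hspan_le : Ideal.span (Set.range fun i => (X i : MvPolynomial (Fin n) (ZMod 3)) - C (a i)) ≤ P := by
      rw [Ideal.span_le]
      rintro _ ⟨i, rfl⟩
      exact haP i
    have hCP : (C (eval a p) : MvPolynomial (Fin n) (ZMod 3)) ∈ P := by
      have : p - (p - C (eval a p)) ∈ P := P.sub_mem hp (hspan_le hsub)
      simpa using this
    have heval : eval a p = 0 := by
      by_contra hne
      have : IsUnit (C (eval a p) : MvPolynomial (Fin n) (ZMod 3)) := by
        exact (isUnit_iff_ne_zero.mpr hne).map C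
      exact hP.ne_top (P.eq_top_of_isUnit_mem hCP this)
    have := sub_C_eval_mem_span_point a p
    rwa [heval, map_zero, sub_zero] at this
  · rw [Ideal.span_le]
    rintro _ ⟨i, rfl⟩
    exact haP i
end

section
/- Let n be a natural number and let I be an ideal of MvPolynomial (Fin n) (ZMod 3) such that X_i² − X_i ∈ I for every i. Then I equals the intersection, taken over all points a : Fin n → ZMod 3 with a(i) ∈ {0,1} for every i at which every polynomial of I evaluates to 0, of the ideals generated by {X_1 − a(1), …, X_n − a(n)} (the intersection over the empty family being the whole ring). -/
open MvPolynomial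

/-- The `{0,1}`-valued point of `ZMod 3` corresponding to a boolean vector. -/
private def bpt (n : ℕ) (a : Fin n → Bool) : Fin n → ZMod 3 := fun i => if a i then 1 else 0

/-- The indicator polynomial of the point `bpt n a` on the boolean cube. -/
private noncomputable def epoly (n : ℕ) (a : Fin n → Bool) :
    MvPolynomial (Fin n) (ZMod 3) :=
  ∏ i, (if a i then X i else 1 - X i)

private lemma sum_epoly (n : ℕ) : ∑ a : Fin n → Bool, epoly n a = 1 := by
  have := (Fintype.prod_sum (κ := fun _ : Fin n => Bool)
    (fun i b => (if b then X i else 1 - X i : MvPolynomial (Fin n) (ZMod 3)))).symm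
  simp only [epoly]
  rw [this]
  have : ∀ i : Fin n, ∑ b : Bool,
      (if b then X i else 1 - X i : MvPolynomial (Fin n) (ZMod 3)) = 1 := by
    intro i; simp [Fintype.sum_bool]
  simp [this]

private lemma eval_epoly (n : ℕ) (a b : Fin n → Bool) :
    eval (bpt n b) (epoly n a) = if a = b then 1 else 0 := by
  classical
  simp only [epoly, map_prod]
  by_cases hab : a = b
  · subst hab
    simp only [if_pos rfl]
    apply Finset.prod_eq_one
    intro i _
    cases h : a i <;> simp [h, bpt]
  · simp only [if_neg hab]
    obtain ⟨i, hi⟩ := Function.ne_iff.mp hab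
    apply Finset.prod_eq_zero (Finset.mem_univ i)
    cases ha : a i <;> cases hb : b i <;> simp [ha, hb, bpt] at hi ⊢

private lemma factor_mem (n : ℕ) (I : Ideal (MvPolynomial (Fin n) (ZMod 3)))
    (hI : ∀ i : Fin n, X i ^ 2 - X i ∈ I) (a : Fin n → Bool) (i : Fin n) :
    (X i - C (bpt n a i)) * epoly n a ∈ I := by
  classical
  have hsplit : epoly n a = (if a i then X i else 1 - X i) *
      ∏ j ∈ Finset.univ.erase i, (if a j then X j else 1 - X j) :=
    (Finset.mul_prod_erase Finset.univ _ (Finset.mem_univ i)).symm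
  rw [hsplit]
  cases h : a i
  · have : (X i - C (bpt n a i)) * ((1 - X i) *
        ∏ j ∈ Finset.univ.erase i, (if a j then X j else 1 - X j)) =
        -((X i ^ 2 - X i) * ∏ j ∈ Finset.univ.erase i, (if a j then X j else 1 - X j)) := by
      simp [bpt, h]; ring
    rw [if_neg (by simp), this]
    exact I.neg_mem (I.mul_mem_right _ (hI i))
  · have : (X i - C (bpt n a i)) * (X i *
        ∏ j ∈ Finset.univ.erase i, (if a j then X j else 1 - X j)) =
        (X i ^ 2 - X i) * ∏ j ∈ Finset.univ.erase i, (if a j then X j else 1 - X j) := by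
      simp [bpt, h]; ring
    rw [if_pos rfl, this]
    exact I.mul_mem_right _ (hI i)

/-- Interpolation: every polynomial agrees, modulo `I`, with its boolean
interpolation. -/
private lemma interp_mem (n : ℕ) (I : Ideal (MvPolynomial (Fin n) (ZMod 3)))
    (hI : ∀ i : Fin n, X i ^ 2 - X i ∈ I) (p : MvPolynomial (Fin n) (ZMod 3)) :
    p - ∑ a : Fin n → Bool, C (eval (bpt n a) p) * epoly n a ∈ I := by
  induction p using MvPolynomial.induction_on with
  | C c =>
    have : (C c : MvPolynomial (Fin n) (ZMod 3)) -
        ∑ a : Fin n → Bool, C (eval (bpt n a) (C c)) * epoly n a = 0 := by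
      simp only [eval_C, ← Finset.mul_sum, sum_epoly, mul_one, sub_self]
    rw [this]; exact I.zero_mem
  | add p q hp hq =>
    have heq : (p + q) - ∑ a : Fin n → Bool, C (eval (bpt n a) (p + q)) * epoly n a =
        (p - ∑ a : Fin n → Bool, C (eval (bpt n a) p) * epoly n a) +
        (q - ∑ a : Fin n → Bool, C (eval (bpt n a) q) * epoly n a) := by
      simp only [map_add, add_mul, Finset.sum_add_distrib]
      ring
    rw [heq]; exact I.add_mem hp hq
  | mul_X p i hp =>
    have h1 : (p - ∑ a : Fin n → Bool, C (eval (bpt n a) p) * epoly n a) * X i ∈ I :=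
      I.mul_mem_right _ hp
    have h2 : ∑ a : Fin n → Bool,
        C (eval (bpt n a) p) * ((X i - C (bpt n a i)) * epoly n a) ∈ I :=
      Ideal.sum_mem _ fun a _ => I.mul_mem_left _ (factor_mem n I hI a i)
    have heq : p * X i - ∑ a : Fin n → Bool, C (eval (bpt n a) (p * X i)) * epoly n a =
        (p - ∑ a : Fin n → Bool, C (eval (bpt n a) p) * epoly n a) * X i +
        ∑ a : Fin n → Bool,
          C (eval (bpt n a) p) * ((X i - C (bpt n a i)) * epoly n a) := by
      have hsum : ∑ a : Fin n → Bool, C (eval (bpt n a) (p * X i)) * epoly n a =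
          ∑ a : Fin n → Bool, (C (eval (bpt n a) p) * epoly n a * X i -
            C (eval (bpt n a) p) * ((X i - C (bpt n a i)) * epoly n a)) := by
        refine Finset.sum_congr rfl fun a _ => ?_
        rw [eval_mul, eval_X, map_mul]
        ring
      rw [hsum, Finset.sum_sub_distrib, ← Finset.sum_mul, sub_mul]
      ring
    rw [heq]
    exact I.add_mem h1 h2

/-- Every polynomial is congruent to its value modulo the maximal ideal of a point. -/
private lemma sub_eval_mem_span (n : ℕ) (a : Fin n → ZMod 3)
    (p : MvPolynomial (Fin n) (ZMod 3)) :
    p - C (eval a p) ∈ Ideal.span (Set.range fun i => X i - C (a i)) := by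
  induction p using MvPolynomial.induction_on with
  | C c => simp
  | add p q hp hq =>
    have heq : (p + q) - C (eval a (p + q)) = (p - C (eval a p)) + (q - C (eval a q)) := by
      rw [map_add, map_add]; ring
    rw [heq]; exact Ideal.add_mem _ hp hq
  | mul_X p i hp =>
    have h1 := Ideal.mul_mem_right (X i) _ hp
    have h2 : X i - C (a i) ∈ Ideal.span (Set.range fun i => X i - C (a i)) :=
      Ideal.subset_span ⟨i, rfl⟩
    have h3 := Ideal.mul_mem_left _ (C (eval a p)) h2
    have heq : p * X i - C (eval a (p * X i)) =
        (p - C (eval a p)) * X i + C (eval a p) * (X i - C (a i)) := by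
      rw [eval_mul, eval_X, map_mul]; ring
    rw [heq]; exact Ideal.add_mem _ h1 h3

private lemma eval_span_zero (n : ℕ) (a : Fin n → ZMod 3)
    {p : MvPolynomial (Fin n) (ZMod 3)}
    (hp : p ∈ Ideal.span (Set.range fun i => X i - C (a i))) : eval a p = 0 := by
  have hle : Ideal.span (Set.range fun i => X i - C (a i)) ≤
      RingHom.ker (eval a) := by
    rw [Ideal.span_le]
    rintro q ⟨i, rfl⟩
    simp [RingHom.mem_ker]
  exact hle hp

/-- an ideal of `MvPolynomial (Fin n) (ZMod 3)` containing the
polynomials `Xᵢ² − Xᵢ` equals the intersection, over the `{0,1}`-valued points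
`a` of its variety, of the maximal ideals `⟨X₁ − a₁, …, Xₙ − aₙ⟩` (the
intersection over the empty family being the whole ring). -/
theorem eq_iInf_span_points_of_sq_sub_self_mem
    (n : ℕ) (I : Ideal (MvPolynomial (Fin n) (ZMod 3)))
    (hI : ∀ i : Fin n, MvPolynomial.X i ^ 2 - MvPolynomial.X i ∈ I) :
    I = ⨅ (a : Fin n → ZMod 3)
          (_ : (∀ i, a i = 0 ∨ a i = 1) ∧ ∀ p ∈ I, MvPolynomial.eval a p = 0),
          Ideal.span (Set.range fun i => MvPolynomial.X i - MvPolynomial.C (a i)) := by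
  classical
  apply le_antisymm
  · refine le_iInf fun a => le_iInf fun h => fun p hp => ?_
    have := sub_eval_mem_span n a p
    rwa [h.2 p hp, map_zero, sub_zero] at this
  · intro p hp
    simp only [Ideal.mem_iInf] at hp
    have hsum : ∑ a : Fin n → Bool, C (eval (bpt n a) p) * epoly n a ∈ I := by
      refine Ideal.sum_mem _ fun a _ => ?_
      by_cases hcase : ∀ q ∈ I, eval (bpt n a) q = 0
      · have h01 : ∀ i, bpt n a i = 0 ∨ bpt n a i = 1 := by
          intro i; cases h : a i <;> simp [bpt, h]
        have hp' : p ∈ Ideal.span (Set.range fun i => X i - C (bpt n a i)) :=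
          hp (bpt n a) ⟨h01, hcase⟩
        rw [eval_span_zero n (bpt n a) hp', map_zero, zero_mul]
        exact I.zero_mem
      · push_neg at hcase
        obtain ⟨q, hqI, hq0⟩ := hcase
        set c : ZMod 3 := eval (bpt n a) q with hc
        -- r = epoly a * (q - C c) vanishes at every boolean point, so r ∈ I
        have hr : epoly n a * (q - C c) ∈ I := by
          have := interp_mem n I hI (epoly n a * (q - C c))
          have hz : ∀ b : Fin n → Bool,
              eval (bpt n b) (epoly n a * (q - C c)) = 0 := by
            intro b
            rw [eval_mul, eval_epoly]
            by_cases hab : a = b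
            · subst hab; simp [← hc]
            · simp [if_neg hab]
          simpa [hz] using this
        have hce : C c * epoly n a ∈ I := by
          have h1 : epoly n a * q ∈ I := I.mul_mem_left _ hqI
          have heq : C c * epoly n a = epoly n a * q - epoly n a * (q - C c) := by ring
          rw [heq]; exact I.sub_mem h1 hr
        have he : epoly n a ∈ I := by
          have := I.mul_mem_left (C c⁻¹) hce
          rwa [← mul_assoc, ← map_mul, inv_mul_cancel₀ hq0, map_one, one_mul] at this
        exact I.mul_mem_left _ he
    have := I.add_mem (interp_mem n I hI p) hsum
    simpa using this
end

section
/- Let σ be a type, s a subset of σ, G a set of polynomials in MvPolynomial σ (ZMod 3), and a : σ → ZMod 3 a function with a(j) ∈ {0,1} for every j ∈ s. Then the ideal generated by G ∪ {X_j³ − X_j : j ∈ s} ∪ {X_j − a(j) : j ∈ s} equals the sum of the ideal generated by G ∪ {X_j² − X_j : j ∈ s} and the ideal generated by {X_j − a(j) : j ∈ s}. -/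
open MvPolynomial

/-- the ideal generated by `G`, the cubic field equations
`Xⱼ³ − Xⱼ` (`j ∈ s`) and the point equations `Xⱼ − aⱼ` (`j ∈ s`, with
`aⱼ ∈ {0,1}`) equals the sum of the ideal generated by `G` together with the
quadratic field equations `Xⱼ² − Xⱼ` (`j ∈ s`) and the ideal generated by the
`Xⱼ − aⱼ`. -/
theorem span_union_cubic_point_eq_span_union_quadratic_add_span_point
    {σ : Type*} (s : Set σ) (G : Set (MvPolynomial σ (ZMod 3)))
    (a : σ → ZMod 3) (ha : ∀ j ∈ s, a j = 0 ∨ a j = 1) :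
    Ideal.span (G ∪ ((fun j => X j ^ 3 - X j) '' s) ∪ ((fun j => X j - C (a j)) '' s)) =
      Ideal.span (G ∪ ((fun j => X j ^ 2 - X j) '' s)) +
        Ideal.span ((fun j => X j - C (a j)) '' s) := by
  apply le_antisymm
  · rw [Ideal.span_le]
    rintro p ((hp | ⟨j, hj, rfl⟩) | ⟨j, hj, rfl⟩)
    · exact Submodule.mem_sup_left (Ideal.subset_span (Or.inl hp))
    · have key : (X j : MvPolynomial σ (ZMod 3)) ^ 3 - X j
          = (X j + 1) * (X j ^ 2 - X j) := by ring
      show X j ^ 3 - X j ∈ _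
      rw [key]
      exact Submodule.mem_sup_left
        (Ideal.mul_mem_left _ _ (Ideal.subset_span (Or.inr ⟨j, hj, rfl⟩)))
    · exact Submodule.mem_sup_right (Ideal.subset_span ⟨j, hj, rfl⟩)
  · apply sup_le <;> rw [Ideal.span_le]
    · rintro p (hp | ⟨j, hj, rfl⟩)
      · exact Ideal.subset_span (Or.inl (Or.inl hp))
      · have key : (X j : MvPolynomial σ (ZMod 3)) ^ 2 - X j
            = (X j - C (a j)) * (X j + C (a j) - 1) := by
          rcases ha j hj with h | h <;> rw [h] <;> simp <;> ring
        show X j ^ 2 - X j ∈ _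
        rw [key]
        exact Ideal.mul_mem_right _ _ (Ideal.subset_span (Or.inr ⟨j, hj, rfl⟩))
    · rintro p ⟨j, hj, rfl⟩
      exact Ideal.subset_span (Or.inr ⟨j, hj, rfl⟩)
end
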